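/- If π is greedy with respect to Q ∈ ℝ^{|S||A|}, then component-wise Q* − Q^π ≤ [(I − γPΠ^{π*})^{-1} + (I − γPΠ^π)^{-1}] |𝒯Q − Q|, where |·| denotes the entrywise absolute value. -/

import Mathlib

open Finset

section AuxNeumann
open Matrix
attribute [local instance]
  Matrix.linftyOpNormedAddCommGroup Matrix.linftyOpNormedRing Matrix.linftyOpNormedAlgebra

set_option linter.unusedSectionVars false

variable {ι : Type*} [Fintype ι] [DecidableEq ι]

lemma aux_norm_lt_one (B : Matrix ι ι ℝ) (hB : ∀ i j, 0 ≤ B i j)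
    (hrow : ∀ i, ∑ j, B i j < 1) : ‖B‖ < 1 := by
  rw [Matrix.linfty_opNorm_def]
  rw [show (1 : ℝ) = ((1 : NNReal) : ℝ) by norm_num, NNReal.coe_lt_coe]
  refine Finset.sup_lt_iff (by norm_num) |>.2 fun i _ => ?_
  rw [← NNReal.coe_lt_coe, NNReal.coe_sum]
  push_cast
  calc ∑ j, (‖B i j‖₊ : ℝ) = ∑ j, B i j := by
        refine Finset.sum_congr rfl fun j _ => ?_
        simp [Real.norm_eq_abs, abs_of_nonneg (hB i j)]
    _ < 1 := hrow i

lemma aux_entry_le (A : Matrix ι ι ℝ) (i j : ι) : ‖A i j‖ ≤ ‖A‖ := by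
  rw [← coe_nnnorm, ← coe_nnnorm, NNReal.coe_le_coe, Matrix.linfty_opNNNorm_def]
  exact le_trans (Finset.single_le_sum (f := fun j => ‖A i j‖₊) (fun _ _ => zero_le)
    (Finset.mem_univ j)) (Finset.le_sup (f := fun i => ∑ j : ι, ‖A i j‖₊) (Finset.mem_univ i))

noncomputable def entryCLM (i j : ι) : Matrix ι ι ℝ →L[ℝ] ℝ :=
  LinearMap.mkContinuous
    { toFun := fun A => A i j, map_add' := fun _ _ => rfl, map_smul' := fun _ _ => rfl }
    1 (fun A => by rw [one_mul]; exact aux_entry_le A i j)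

lemma aux_pow_nonneg (B : Matrix ι ι ℝ) (hB : ∀ i j, 0 ≤ B i j) (n : ℕ) :
    ∀ i j, 0 ≤ (B ^ n) i j := by
  induction n with
  | zero => intro i j; by_cases h : i = j <;> simp [pow_zero, Matrix.one_apply, h]
  | succ n ih =>
    intro i j
    rw [pow_succ, Matrix.mul_apply]
    exact Finset.sum_nonneg fun k _ => mul_nonneg (ih i k) (hB k j)

lemma aux_inv_nonneg (B : Matrix ι ι ℝ) (hB : ∀ i j, 0 ≤ B i j) (h : ‖B‖ < 1) :
    ∀ i j, 0 ≤ (1 - B)⁻¹ i j := by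
  intro i j
  have hs : HasSum (fun n : ℕ => (B ^ n) i j) ((1 - B)⁻¹ i j) := by
    rw [Matrix.nonsing_inv_eq_ringInverse]
    exact (hasSum_geom_series_inverse B h).mapL (entryCLM i j)
  exact hasSum_le (fun n => aux_pow_nonneg B hB n i j) hasSum_zero hs

lemma aux_isUnit (B : Matrix ι ι ℝ) (h : ‖B‖ < 1) : IsUnit (1 - B) :=
  isUnit_one_sub_of_norm_lt_one h

lemma aux_mulVec_mono (B : Matrix ι ι ℝ) (hB : ∀ i j, 0 ≤ B i j) {u v : ι → ℝ} (h : u ≤ v) :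
    B.mulVec u ≤ B.mulVec v := fun i =>
  Finset.sum_le_sum fun j _ => mul_le_mul_of_nonneg_left (h j) (hB i j)

lemma aux_le_inv_mulVec (B : Matrix ι ι ℝ) (hB : ∀ i j, 0 ≤ B i j)
    (hrow : ∀ i, ∑ j, B i j < 1)
    {u v : ι → ℝ} (h : (1 - B).mulVec u ≤ v) : u ≤ (1 - B)⁻¹.mulVec v := by
  have hn := aux_norm_lt_one B hB hrow
  have hu : IsUnit (1 - B).det := (Matrix.isUnit_iff_isUnit_det _).1 (aux_isUnit B hn)
  have heq : u = (1 - B)⁻¹.mulVec ((1 - B).mulVec u) := by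
    rw [Matrix.mulVec_mulVec, Matrix.nonsing_inv_mul _ hu, Matrix.one_mulVec]
  rw [heq]
  exact aux_mulVec_mono _ (aux_inv_nonneg B hB hn) h

end AuxNeumann

theorem lemma1_optimality_residual_bound
    {S A : Type*} [Fintype S] [Fintype A] [Nonempty A] [DecidableEq S] [DecidableEq A]
    (P : S → A → S → ℝ) (rew : S → A → ℝ) (γ : ℝ)
    (π πstar : S → A → ℝ) (Q Qπ Qstar : S × A → ℝ)
    (hP0 : ∀ s a s', 0 ≤ P s a s') (hP1 : ∀ s a, ∑ s', P s a s' = 1)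
    (hπ0 : ∀ s a, 0 ≤ π s a) (hπ1 : ∀ s, ∑ a, π s a = 1)
    (hπstar0 : ∀ s a, 0 ≤ πstar s a) (hπstar1 : ∀ s, ∑ a, πstar s a = 1)
    (hγ0 : 0 ≤ γ) (hγ1 : γ < 1)
    (Mπ Mstar : Matrix (S × A) (S × A) ℝ)
    (hMπ : Mπ = fun p q => P p.1 p.2 q.1 * π q.1 q.2)
    (hMstar : Mstar = fun p q => P p.1 p.2 q.1 * πstar q.1 q.2)
    -- the Bellman optimality operator applied to Q
    (TQ : S × A → ℝ)
    (hTQ : TQ = fun p => rew p.1 p.2 + γ * ∑ s', P p.1 p.2 s' *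
        (Finset.univ.sup' Finset.univ_nonempty fun a' => Q (s', a')))
    -- π is greedy with respect to Q
    (hgreedy : ∀ s a, 0 < π s a →
      Q (s, a) = Finset.univ.sup' Finset.univ_nonempty fun a' => Q (s, a'))
    -- Q^π is the fixed point of 𝒯^π
    (hQπ : (fun p => rew p.1 p.2) + γ • Mπ.mulVec Qπ = Qπ)
    -- Q* is the fixed point of 𝒯^{π*} and of the Bellman optimality operator 𝒯
    (hQstar : (fun p => rew p.1 p.2) + γ • Mstar.mulVec Qstar = Qstar)
    (hQstarOpt : ∀ p : S × A,
      Qstar p = rew p.1 p.2 + γ * ∑ s', P p.1 p.2 s' *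
        (Finset.univ.sup' Finset.univ_nonempty fun a' => Qstar (s', a'))) :
    Qstar - Qπ ≤
      ((1 - γ • Mstar)⁻¹ + (1 - γ • Mπ)⁻¹).mulVec (fun p => |TQ p - Q p|) := by
  set aε : S × A → ℝ := fun p => |TQ p - Q p| with haε
  -- row sums of the scaled matrices
  have hrowgen : ∀ (ρ : S → A → ℝ), (∀ s, ∑ a, ρ s a = 1) →
      ∀ (M : Matrix (S × A) (S × A) ℝ),
      M = (fun p q => P p.1 p.2 q.1 * ρ q.1 q.2) →
      ∀ i, ∑ j, (γ • M) i j < 1 := by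
    intro ρ hρ1 M hM i
    have h : ∑ j, (γ • M) i j = γ := by
      simp only [hM, Matrix.smul_apply, smul_eq_mul]
      rw [Fintype.sum_prod_type]
      calc ∑ s', ∑ a', γ * (P i.1 i.2 s' * ρ s' a')
          = ∑ s', γ * P i.1 i.2 s' * ∑ a', ρ s' a' := by
            refine Finset.sum_congr rfl fun s' _ => ?_
            rw [Finset.mul_sum]; exact Finset.sum_congr rfl fun a' _ => by ring
        _ = γ := by
            simp only [hρ1, mul_one]
            rw [← Finset.mul_sum, hP1, mul_one]
    rw [h]; exact hγ1
  have hnonneggen : ∀ (ρ : S → A → ℝ), (∀ s a, 0 ≤ ρ s a) →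
      ∀ (M : Matrix (S × A) (S × A) ℝ),
      M = (fun p q => P p.1 p.2 q.1 * ρ q.1 q.2) →
      ∀ i j, 0 ≤ (γ • M) i j := by
    intro ρ hρ0 M hM i j
    simp only [hM, Matrix.smul_apply, smul_eq_mul]
    exact mul_nonneg hγ0 (mul_nonneg (hP0 _ _ _) (hρ0 _ _))
  -- mulVec structure
  have hmv : ∀ (ρ : S → A → ℝ) (M : Matrix (S × A) (S × A) ℝ),
      M = (fun p q => P p.1 p.2 q.1 * ρ q.1 q.2) →
      ∀ (f : S × A → ℝ) (p : S × A),
      M.mulVec f p = ∑ s', P p.1 p.2 s' * ∑ a', ρ s' a' * f (s', a') := by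
    intro ρ M hM f p
    simp only [hM, Matrix.mulVec, dotProduct]
    rw [Fintype.sum_prod_type]
    refine Finset.sum_congr rfl fun s' _ => ?_
    rw [Finset.mul_sum]
    exact Finset.sum_congr rfl fun a' _ => by ring
  -- greedy policy attains the sup
  have hinner_π : ∀ s : S, ∑ a, π s a * Q (s, a) =
      Finset.univ.sup' Finset.univ_nonempty fun a' => Q (s, a') := by
    intro s
    have h1 : ∀ a ∈ Finset.univ, π s a * Q (s, a) =
        π s a * Finset.univ.sup' Finset.univ_nonempty fun a' => Q (s, a') := by
      intro a _
      rcases eq_or_lt_of_le (hπ0 s a) with h | h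
      · rw [← h, zero_mul, zero_mul]
      · rw [hgreedy s a h]
    rw [Finset.sum_congr rfl h1, ← Finset.sum_mul, hπ1, one_mul]
  have hinner_star : ∀ s : S, ∑ a, πstar s a * Q (s, a) ≤
      Finset.univ.sup' Finset.univ_nonempty fun a' => Q (s, a') := by
    intro s
    calc ∑ a, πstar s a * Q (s, a)
        ≤ ∑ a, πstar s a * Finset.univ.sup' Finset.univ_nonempty fun a' => Q (s, a') :=
          Finset.sum_le_sum fun a _ => mul_le_mul_of_nonneg_left
            (Finset.le_sup' (fun a' => Q (s, a')) (Finset.mem_univ a)) (hπstar0 s a)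
      _ = _ := by rw [← Finset.sum_mul, hπstar1, one_mul]
  -- 𝒯^π Q = 𝒯 Q since π is greedy
  have hTQπ : ∀ p : S × A, TQ p = rew p.1 p.2 + γ * Mπ.mulVec Q p := by
    intro p
    rw [hmv π Mπ hMπ Q p]
    simp only [hTQ, hinner_π]
  -- 𝒯^{π*} Q ≤ 𝒯 Q
  have hTQstar_ge : ∀ p : S × A, rew p.1 p.2 + γ * Mstar.mulVec Q p ≤ TQ p := by
    intro p
    rw [hmv πstar Mstar hMstar Q p, hTQ]
    refine add_le_add_right (mul_le_mul_of_nonneg_left ?_ hγ0) _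
    exact Finset.sum_le_sum fun s' _ =>
      mul_le_mul_of_nonneg_left (hinner_star s') (hP0 _ _ _)
  -- (I - γ P Π*) (Q* - Q) ≤ |𝒯Q - Q|
  have h1 : (1 - γ • Mstar).mulVec (Qstar - Q) ≤ aε := by
    intro p
    have e : (1 - γ • Mstar).mulVec (Qstar - Q) p
        = (Qstar p - Q p) - γ * (Mstar.mulVec Qstar p - Mstar.mulVec Q p) := by
      simp only [Matrix.sub_mulVec, Matrix.mulVec_sub, Matrix.one_mulVec,
        Matrix.smul_mulVec, Pi.sub_apply, Pi.smul_apply, smul_eq_mul]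
      ring
    have hfix : rew p.1 p.2 + γ * Mstar.mulVec Qstar p = Qstar p := by
      have := congrFun hQstar p
      simpa using this
    rw [e]
    have : (Qstar p - Q p) - γ * (Mstar.mulVec Qstar p - Mstar.mulVec Q p)
        = (rew p.1 p.2 + γ * Mstar.mulVec Q p) - Q p := by
      rw [← hfix]; ring
    rw [this]
    calc (rew p.1 p.2 + γ * Mstar.mulVec Q p) - Q p ≤ TQ p - Q p :=
          sub_le_sub_right (hTQstar_ge p) _
      _ ≤ |TQ p - Q p| := le_abs_self _
  -- (I - γ P Π^π) (Q - Q^π) ≤ |𝒯Q - Q|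
  have h2 : (1 - γ • Mπ).mulVec (Q - Qπ) ≤ aε := by
    intro p
    have e : (1 - γ • Mπ).mulVec (Q - Qπ) p
        = (Q p - Qπ p) - γ * (Mπ.mulVec Q p - Mπ.mulVec Qπ p) := by
      simp only [Matrix.sub_mulVec, Matrix.mulVec_sub, Matrix.one_mulVec,
        Matrix.smul_mulVec, Pi.sub_apply, Pi.smul_apply, smul_eq_mul]
      ring
    have hfixπ : rew p.1 p.2 + γ * Mπ.mulVec Qπ p = Qπ p := by
      have := congrFun hQπ p
      simpa using this
    rw [e]
    have : (Q p - Qπ p) - γ * (Mπ.mulVec Q p - Mπ.mulVec Qπ p)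
        = Q p - TQ p := by
      rw [hTQπ p, ← hfixπ]; ring
    rw [this]
    calc Q p - TQ p = -(TQ p - Q p) := by ring
      _ ≤ |TQ p - Q p| := neg_le_abs _
  have b1 : Qstar - Q ≤ (1 - γ • Mstar)⁻¹.mulVec aε :=
    aux_le_inv_mulVec (γ • Mstar) (hnonneggen πstar hπstar0 Mstar hMstar)
      (hrowgen πstar hπstar1 Mstar hMstar) h1
  have b2 : Q - Qπ ≤ (1 - γ • Mπ)⁻¹.mulVec aε :=
    aux_le_inv_mulVec (γ • Mπ) (hnonneggen π hπ0 Mπ hMπ)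
      (hrowgen π hπ1 Mπ hMπ) h2
  intro p
  calc (Qstar - Qπ) p = (Qstar p - Q p) + (Q p - Qπ p) := by
        rw [Pi.sub_apply]; ring
    _ ≤ (1 - γ • Mstar)⁻¹.mulVec aε p + (1 - γ • Mπ)⁻¹.mulVec aε p :=
        add_le_add (b1 p) (b2 p)
    _ = ((1 - γ • Mstar)⁻¹ + (1 - γ • Mπ)⁻¹).mulVec aε p := by
        rw [Matrix.add_mulVec]; rfl
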